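/- For $p\in[0,1/2]$ set $g_p=p(1-p)/3$ and $z_p=(1-p)/4$. Then the Boltzmann partition function over finite rooted quadrangulations with a boundary, $F(g,z)=\sum_{\mathsf{q}} g^{\#F(\mathsf{q})} z^{\#\partial\mathsf{q}/2}$, satisfies $F(g_p,z_p) = \frac{2}{3}\cdot\frac{3-4p}{1-p}$. -/

import Mathlib

open Filter Finset Topology

noncomputable def bb (n : ℕ) : ℝ := (Nat.centralBinom n : ℝ) / 4 ^ n

lemma bb_nonneg (n : ℕ) : 0 ≤ bb n := by
  unfold bb; positivity

lemma bb_zero : bb 0 = 1 := by simp [bb, Nat.centralBinom]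

lemma bb_succ (n : ℕ) : (2 * (n : ℝ) + 2) * bb (n + 1) = (2 * n + 1) * bb n := by
  have h := Nat.succ_mul_centralBinom_succ n
  have h' : ((n : ℝ) + 1) * (Nat.centralBinom (n + 1) : ℝ)
      = 2 * (2 * n + 1) * (Nat.centralBinom n : ℝ) := by exact_mod_cast h
  have h4 : (4 : ℝ) ^ (n + 1) = 4 * 4 ^ n := by ring
  unfold bb
  rw [h4]
  have hpow : (4 : ℝ) ^ n ≠ 0 := by positivity
  field_simp
  linear_combination 2 * h'

lemma bb_sq (n : ℕ) : (2 * (n : ℝ) + 1) * bb n ^ 2 ≤ 1 := by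
  induction n with
  | zero => simp [bb_zero]
  | succ n ih =>
    have h := bb_succ n
    have hb := bb_nonneg n
    have hb1 := bb_nonneg (n + 1)
    have hsq : ((2 * (n : ℝ) + 2) * bb (n + 1)) ^ 2 = ((2 * (n : ℝ) + 1) * bb n) ^ 2 := by
      rw [h]
    have key : (2 * (n : ℝ) + 3) * ((2 * (n : ℝ) + 2) ^ 2 * bb (n + 1) ^ 2)
        ≤ (2 * (n : ℝ) + 2) ^ 2 := by nlinarith [hsq, ih, sq_nonneg (bb n)]
    push_cast
    nlinarith [key]

lemma bb_tendsto : Tendsto bb atTop (𝓝 0) := by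
  have hle : ∀ n : ℕ, bb n ≤ Real.sqrt (1 / (2 * (n : ℝ) + 1)) := by
    intro n
    have h1 : (0 : ℝ) < 2 * (n : ℝ) + 1 := by positivity
    have h2 : bb n ^ 2 ≤ 1 / (2 * (n : ℝ) + 1) := by
      rw [le_div_iff₀ h1]; nlinarith [bb_sq n]
    calc bb n = Real.sqrt (bb n ^ 2) := (Real.sqrt_sq (bb_nonneg n)).symm
      _ ≤ Real.sqrt (1 / (2 * (n : ℝ) + 1)) := Real.sqrt_le_sqrt h2
  have h0 : Tendsto (fun n : ℕ => (1 : ℝ) / (2 * (n : ℝ) + 1)) atTop (𝓝 0) := by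
    apply squeeze_zero (fun n => by positivity)
      (fun n => ?_) tendsto_one_div_add_atTop_nhds_zero_nat
    have h1 : (0 : ℝ) < 2 * (n : ℝ) + 1 := by positivity
    have h2 : (0 : ℝ) < (n : ℝ) + 1 := by positivity
    rw [div_le_div_iff₀ h1 h2]
    nlinarith
  have hs : Tendsto (fun n : ℕ => Real.sqrt (1 / (2 * (n : ℝ) + 1))) atTop (𝓝 0) := by
    have := h0.sqrt
    simpa using this
  exact squeeze_zero bb_nonneg hle hs

lemma partial_sum (r : ℝ) (n : ℕ) :
    ∑ σ ∈ range n, (2 + (σ : ℝ) * r) * bb σ / (((σ : ℝ) + 1) * ((σ : ℝ) + 2))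
      = 2 / 3 * (2 + r)
        - (4 / (3 * ((n : ℝ) + 1)) + r * (2 - 4 / (3 * ((n : ℝ) + 1)))) * bb n := by
  induction n with
  | zero => simp [bb_zero]; ring
  | succ n ih =>
    rw [Finset.sum_range_succ, ih]
    have h := bb_succ n
    have hx : bb (n + 1) = (2 * (n : ℝ) + 1) * bb n / (2 * n + 2) := by
      have : (2 * (n : ℝ) + 2) ≠ 0 := by positivity
      field_simp
      linarith [h]
    push_cast
    rw [hx]
    have h1 : ((n : ℝ) + 1) ≠ 0 := by positivity
    have h2 : ((n : ℝ) + 2) ≠ 0 := by positivity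
    have h3 : (2 * (n : ℝ) + 2) ≠ 0 := by positivity
    field_simp
    ring

lemma key_hasSum (r : ℝ) (hr : 0 ≤ r) :
    HasSum (fun σ : ℕ => (2 + (σ : ℝ) * r) * bb σ / (((σ : ℝ) + 1) * ((σ : ℝ) + 2)))
      (2 / 3 * (2 + r)) := by
  have hnn : ∀ σ : ℕ,
      0 ≤ (2 + (σ : ℝ) * r) * bb σ / (((σ : ℝ) + 1) * ((σ : ℝ) + 2)) := by
    intro σ
    have := bb_nonneg σ
    have : (0:ℝ) ≤ (σ : ℝ) * r := by positivity
    positivity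
  rw [hasSum_iff_tendsto_nat_of_nonneg hnn]
  have heq : (fun n : ℕ => ∑ σ ∈ range n,
      (2 + (σ : ℝ) * r) * bb σ / (((σ : ℝ) + 1) * ((σ : ℝ) + 2)))
      = fun n : ℕ => 2 / 3 * (2 + r)
        - (4 / (3 * ((n : ℝ) + 1)) + r * (2 - 4 / (3 * ((n : ℝ) + 1)))) * bb n := by
    funext n; exact partial_sum r n
  rw [heq]
  have htail : Tendsto (fun n : ℕ =>
      (4 / (3 * ((n : ℝ) + 1)) + r * (2 - 4 / (3 * ((n : ℝ) + 1)))) * bb n)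
      atTop (𝓝 0) := by
    have hb0 : Tendsto (fun n : ℕ => (4 / 3 + 2 * r) * bb n) atTop (𝓝 0) := by
      have := bb_tendsto.const_mul (4 / 3 + 2 * r)
      simpa using this
    apply squeeze_zero (fun n => ?_) (fun n => ?_) hb0
    · have hn1 : (0:ℝ) < (n : ℝ) + 1 := by positivity
      have hc1 : (0:ℝ) ≤ 4 / (3 * ((n : ℝ) + 1)) := by positivity
      have hc2 : 4 / (3 * ((n : ℝ) + 1)) ≤ 4 / 3 := by
        rw [div_le_div_iff₀ (by positivity) (by norm_num)]
        nlinarith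
      have hc3 : (0:ℝ) ≤ r * (2 - 4 / (3 * ((n : ℝ) + 1))) := by
        apply mul_nonneg hr; linarith
      exact mul_nonneg (by linarith) (bb_nonneg n)
    · have hn1 : (0:ℝ) < (n : ℝ) + 1 := by positivity
      have hc1 : (0:ℝ) ≤ 4 / (3 * ((n : ℝ) + 1)) := by positivity
      have hc2 : 4 / (3 * ((n : ℝ) + 1)) ≤ 4 / 3 := by
        rw [div_le_div_iff₀ (by positivity) (by norm_num)]
        nlinarith
      have hc4 : r * (2 - 4 / (3 * ((n : ℝ) + 1))) ≤ 2 * r := by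
        nlinarith
      exact mul_le_mul_of_nonneg_right (by linarith) (bb_nonneg n)
  have := (tendsto_const_nhds (x := 2 / 3 * (2 + r)) (f := atTop (α := ℕ))).sub htail
  simpa using this

/-- For `p ∈ [0,1/2]`, `g_p = p(1-p)/3`, `z_p = (1-p)/4`, the Boltzmann
partition function of quadrangulations with a boundary satisfies
`F(g_p, z_p) = ∑_{σ≥0} F_σ(g_p) z_p^σ = (2/3)·(3-4p)/(1-p)`, where
`F_σ(g_p) = (2σ)!/(σ!(σ+2)!) · (2 + σ(1-2p)/(1-p)) · (1-p)^{-σ}`. -/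
theorem boltzmann_partition_function_value (p : ℝ) (hp0 : 0 ≤ p) (hp : p ≤ 1/2) :
    ∑' σ : ℕ,
        (((2 * σ).factorial : ℝ) / ((σ.factorial : ℝ) * ((σ + 2).factorial : ℝ))
          * (2 + (σ : ℝ) * (1 - 2 * p) / (1 - p)) * (1 / (1 - p)) ^ σ)
        * ((1 - p) / 4) ^ σ
      = (2 / 3) * (3 - 4 * p) / (1 - p) := by
  have hp1 : (1 : ℝ) - p > 0 := by linarith
  have hp1' : (1 : ℝ) - p ≠ 0 := ne_of_gt hp1
  set r : ℝ := (1 - 2 * p) / (1 - p) with hr_def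
  have hr : 0 ≤ r := div_nonneg (by linarith) (le_of_lt hp1)
  have hkey := key_hasSum r hr
  have hfeq : ∀ σ : ℕ,
      (((2 * σ).factorial : ℝ) / ((σ.factorial : ℝ) * ((σ + 2).factorial : ℝ))
          * (2 + (σ : ℝ) * (1 - 2 * p) / (1 - p)) * (1 / (1 - p)) ^ σ)
        * ((1 - p) / 4) ^ σ
      = (2 + (σ : ℝ) * r) * bb σ / (((σ : ℝ) + 1) * ((σ : ℝ) + 2)) := by
    intro σ
    have hcb : ((2 * σ).factorial : ℝ)
        = (Nat.centralBinom σ : ℝ) * (σ.factorial : ℝ) * (σ.factorial : ℝ) := by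
      have := Nat.choose_mul_factorial_mul_factorial (Nat.le_mul_of_pos_left σ (by norm_num : 0 < 2))
      have h2 : 2 * σ - σ = σ := by omega
      rw [h2] at this
      exact_mod_cast (this.symm)
    have hfac2 : ((σ + 2).factorial : ℝ)
        = ((σ : ℝ) + 2) * ((σ : ℝ) + 1) * (σ.factorial : ℝ) := by
      push_cast [Nat.factorial_succ]
      ring
    have hpow : (1 / (1 - p)) ^ σ * ((1 - p) / 4) ^ σ = (1 / 4 : ℝ) ^ σ := by
      rw [← mul_pow]
      congr 1
      field_simp
    have hbb : bb σ = (Nat.centralBinom σ : ℝ) * (1 / 4) ^ σ := by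
      unfold bb
      rw [div_pow, one_pow]
      ring
    have hfσ : (σ.factorial : ℝ) ≠ 0 := by positivity
    have h1 : ((σ : ℝ) + 1) ≠ 0 := by positivity
    have h2 : ((σ : ℝ) + 2) ≠ 0 := by positivity
    rw [mul_assoc _ _ (((1 - p) / 4) ^ σ), hpow, hcb, hfac2, hbb]
    have hrr : (σ : ℝ) * (1 - 2 * p) / (1 - p) = (σ : ℝ) * r := by
      rw [hr_def]; ring
    rw [hrr]
    field_simp
  rw [tsum_congr hfeq, hkey.tsum_eq, hr_def]
  field_simp
  ring
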